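/- Let p : ℝ → ℝ be continuous and 1-periodic, and let u : ℝ → ℝ be a C¹ 1-periodic solution of u'(x) = 2 p(x) u(x) + c with associated constant c ∈ ℝ and ∫₀¹ u = ∫₀¹ q for some continuous q with q negative somewhere. If u is somewhere negative then u(x) < 0 for all x; in particular if c ≠ 0 then u has no zero, and moreover if u is 1-periodic and never zero then necessarily c = 0. -/

import Mathlib

theorem lagrange_multiplier_sign (p u q : ℝ → ℝ) (c : ℝ)
    (hp : Continuous p) (hpper : ∀ x, p (x + 1) = p x)
    (hpmean : ∫ x in (0:ℝ)..1, p x = 0)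
    (hu : ContDiff ℝ 1 u) (huper : ∀ x, u (x + 1) = u x)
    (hode : ∀ x, deriv u x = 2 * p x * u x + c)
    (hq : Continuous q) (hqneg : ∃ x, q x < 0)
    (hint : ∫ x in (0:ℝ)..1, u x = ∫ x in (0:ℝ)..1, q x) :
    ((∃ x, u x < 0) → ∀ x, u x < 0) ∧
    (c ≠ 0 → ∀ x, u x ≠ 0) ∧
    ((∀ x, u x ≠ 0) → c = 0) := by
  set P : ℝ → ℝ := fun x => ∫ t in (0:ℝ)..x, p t with hPdef
  have hPderiv : ∀ x, HasDerivAt P (p x) x := fun x =>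
    (hp.integral_hasStrictDerivAt 0 x).hasDerivAt
  have hPcont : Continuous P :=
    continuous_iff_continuousAt.2 fun x => (hPderiv x).continuousAt
  have hP0 : P 0 = 0 := intervalIntegral.integral_same
  have hP1 : P 1 = 0 := hpmean
  set v : ℝ → ℝ := fun x => u x * Real.exp (-(2 * P x)) with hvdef
  have huderiv : ∀ x, HasDerivAt u (2 * p x * u x + c) x := by
    intro x
    rw [← hode x]
    exact (hu.differentiable one_ne_zero x).hasDerivAt
  have hvderiv : ∀ x, HasDerivAt v (c * Real.exp (-(2 * P x))) x := by
    intro x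
    have hE : HasDerivAt (fun y => Real.exp (-(2 * P y)))
        (Real.exp (-(2 * P x)) * -(2 * p x)) x :=
      (((hPderiv x).const_mul 2).neg).exp
    have h := (huderiv x).mul hE
    refine h.congr_deriv ?_
    ring
  have hEcont : Continuous (fun x => Real.exp (-(2 * P x))) := by fun_prop
  have key : ∫ x in (0:ℝ)..1, c * Real.exp (-(2 * P x)) = v 1 - v 0 :=
    intervalIntegral.integral_eq_sub_of_hasDerivAt (fun x _ => hvderiv x)
      ((continuous_const.mul hEcont).intervalIntegrable 0 1)
  have hu10 : u 1 = u 0 := by simpa using huper 0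
  have hv10 : v 1 - v 0 = 0 := by simp [hvdef, hP0, hP1, hu10]
  have hpos : 0 < ∫ x in (0:ℝ)..1, Real.exp (-(2 * P x)) :=
    intervalIntegral.intervalIntegral_pos_of_pos (hEcont.intervalIntegrable 0 1)
      (fun x => Real.exp_pos _) one_pos
  have hc : c = 0 := by
    rw [intervalIntegral.integral_const_mul, hv10] at key
    rcases mul_eq_zero.1 key with h | h
    · exact h
    · exact absurd h (ne_of_gt hpos)
  have hvconst : ∀ x y, v x = v y := by
    intro x y
    apply is_const_of_deriv_eq_zero
    · exact fun z => (hvderiv z).differentiableAt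
    · intro z
      rw [(hvderiv z).deriv, hc]
      ring
  have huv : ∀ x, u x = v x * Real.exp (2 * P x) := by
    intro x
    rw [hvdef]
    simp [mul_assoc, ← Real.exp_add]
  refine ⟨?_, ?_, fun _ => hc⟩
  · rintro ⟨x₀, hx₀⟩ x
    have hvx₀ : v x₀ < 0 :=
      mul_neg_of_neg_of_pos hx₀ (Real.exp_pos _)
    rw [huv x, hvconst x x₀]
    exact mul_neg_of_neg_of_pos hvx₀ (Real.exp_pos _)
  · exact fun hcne => absurd hc hcne
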